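/- For every odd integer m > 1, the Erdős-Burgess constant of the multiplicative semigroup of ℤ/2mℤ equals the Erdős-Burgess constant of the multiplicative semigroup of ℤ/mℤ. -/

import Mathlib

/-- The Davenport constant of a (multiplicative) commutative group: the least `k > 0` such
that every sequence of `k` elements has a nonempty subsequence with product `1`. -/
noncomputable def Davenport (G : Type*) [CommGroup G] : ℕ :=
  sInf {k : ℕ | 0 < k ∧ ∀ f : Fin k → G,
    ∃ T : Finset (Fin k), T.Nonempty ∧ ∏ i ∈ T, f i = 1}

/-- The Erdős–Burgess constant of a commutative monoid: the least `t > 0` such that every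
sequence of `t` elements has a nonempty subsequence whose product is idempotent. -/
noncomputable def ErdosBurgess (M : Type*) [CommMonoid M] : ℕ :=
  sInf {t : ℕ | 0 < t ∧ ∀ f : Fin t → M,
    ∃ T : Finset (Fin t), T.Nonempty ∧ (∏ i ∈ T, f i) * (∏ i ∈ T, f i) = ∏ i ∈ T, f i}

lemma EB_mem_congr {M N : Type*} [CommMonoid M] [CommMonoid N] (e : M ≃* N) (t : ℕ)
    (h : ∀ f : Fin t → M,
      ∃ T : Finset (Fin t), T.Nonempty ∧ (∏ i ∈ T, f i) * (∏ i ∈ T, f i) = ∏ i ∈ T, f i) :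
    ∀ f : Fin t → N,
      ∃ T : Finset (Fin t), T.Nonempty ∧ (∏ i ∈ T, f i) * (∏ i ∈ T, f i) = ∏ i ∈ T, f i := by
  intro f
  obtain ⟨T, hT, hP⟩ := h (fun i => e.symm (f i))
  refine ⟨T, hT, ?_⟩
  have := congrArg e hP
  simpa [map_prod, map_mul] using this

lemma EB_congr {M N : Type*} [CommMonoid M] [CommMonoid N] (e : M ≃* N) :
    ErdosBurgess M = ErdosBurgess N := by
  unfold ErdosBurgess
  congr 1
  ext t
  simp only [Set.mem_setOf_eq]
  exact ⟨fun ⟨h1, h2⟩ => ⟨h1, EB_mem_congr e t h2⟩,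
    fun ⟨h1, h2⟩ => ⟨h1, EB_mem_congr e.symm t h2⟩⟩

lemma EB_prod_zmod2 (M : Type*) [CommMonoid M] :
    ErdosBurgess (ZMod 2 × M) = ErdosBurgess M := by
  have hidem : ∀ x : ZMod 2, x * x = x := by decide
  unfold ErdosBurgess
  congr 1
  ext t
  simp only [Set.mem_setOf_eq]
  constructor
  · rintro ⟨h1, h2⟩
    refine ⟨h1, fun g => ?_⟩
    obtain ⟨T, hT, hP⟩ := h2 (fun i => (1, g i))
    refine ⟨T, hT, ?_⟩
    have := congrArg Prod.snd hP
    simpa [Prod.snd_prod] using this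
  · rintro ⟨h1, h2⟩
    refine ⟨h1, fun f => ?_⟩
    obtain ⟨T, hT, hP⟩ := h2 (fun i => (f i).2)
    refine ⟨T, hT, ?_⟩
    refine Prod.ext ?_ ?_
    · simpa [Prod.fst_prod] using hidem _
    · simpa [Prod.snd_prod] using hP

theorem stmt5 (m : ℕ) (hm : 1 < m) (hodd : Odd m) :
    ErdosBurgess (ZMod (2 * m)) = ErdosBurgess (ZMod m) := by
  have hcop : Nat.Coprime 2 m := Nat.coprime_two_left.mpr hodd
  have e : ZMod (2 * m) ≃* ZMod 2 × ZMod m :=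
    (ZMod.chineseRemainder hcop).toMulEquiv
  rw [EB_congr e, EB_prod_zmod2]
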